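/- arXiv:1801.07321 — 3 statements merged into one kernel-verified Lean document; each statement's English description precedes it below -/
import Mathlib

section
/- Let A be a deterministic ε-free k-stack push-down automaton with stack alphabets Γ₁,…,Γ_k. Then the topological entropy of the accepted language satisfies η(L(A)) ≤ log₂|Γ₁| + … + log₂|Γ_k|. -/
open Filter Topology

/-- The `n`-th Myhill–Nerode approximation: `u ~ v` iff all witnesses of length at most `n`
agree. -/
def thetaN {α : Type*} (L : Set (List α)) (n : ℕ) (u v : List α) : Prop :=
  ∀ w : List α, w.length ≤ n → ((u ++ w) ∈ L ↔ (v ++ w) ∈ L)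

/-- The index (number of classes) of `thetaN L n`. -/
noncomputable def indexN {α : Type*} (L : Set (List α)) (n : ℕ) : ℕ :=
  Nat.card (Quot (thetaN L n))

/-- Topological entropy of a language, with values in `[0,∞]`. -/
noncomputable def entropy {α : Type*} (L : Set (List α)) : ENNReal :=
  Filter.limsup (fun n : ℕ => ENNReal.ofReal (Real.logb 2 (indexN L n) / n)) Filter.atTop

/-- A deterministic, ε-free, total `k`-stack push-down automaton: the transition
function reads the current state, the top symbol of each stack (`none` meaning the
stack is empty), and an input letter; it yields the new state and, for each stack,
the word pushed in place of the popped top symbol. -/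
structure KPDA (k : ℕ) (Q σ : Type*) (Γ : Fin k → Type*) where
  δ : Q → (∀ i, Option (Γ i)) → σ → Q × (∀ i, List (Γ i))
  q0 : Q
  F : Set Q

/-- One step of the automaton: pop the top of each stack and push the prescribed words. -/
def KPDA.step {k : ℕ} {Q σ : Type*} {Γ : Fin k → Type*} (A : KPDA k Q σ Γ)
    (c : Q × (∀ i, List (Γ i))) (a : σ) : Q × (∀ i, List (Γ i)) :=
  let r := A.δ c.1 (fun i => (c.2 i).head?) a
  (r.1, fun i => r.2 i ++ (c.2 i).tail)

/-- Running the automaton on an input word from a configuration. -/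
def KPDA.run {k : ℕ} {Q σ : Type*} {Γ : Fin k → Type*} (A : KPDA k Q σ Γ)
    (c : Q × (∀ i, List (Γ i))) : List σ → Q × (∀ i, List (Γ i))
  | [] => c
  | a :: w => A.run (A.step c a) w

/-- The language accepted by the automaton (acceptance by final state, starting with
empty stacks). -/
def KPDA.lang {k : ℕ} {Q σ : Type*} {Γ : Fin k → Type*} (A : KPDA k Q σ Γ) :
    Set (List σ) :=
  {w | (A.run (A.q0, fun _ => []) w).1 ∈ A.F}

/-! ### Auxiliary lemmas -/

private lemma head?_eq_of_take_succ {α : Type*} {l l' : List α} {m : ℕ}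
    (h : l.take (m + 1) = l'.take (m + 1)) : l.head? = l'.head? := by
  cases l <;> cases l' <;> simp_all

private lemma tail_take_of_take_succ {α : Type*} {l l' : List α} {m : ℕ}
    (h : l.take (m + 1) = l'.take (m + 1)) : l.tail.take m = l'.tail.take m := by
  cases l <;> cases l' <;> simp_all

private lemma take_append_congr {α : Type*} {m : ℕ} (a : List α) {b b' : List α}
    (h : b.take m = b'.take m) : (a ++ b).take m = (a ++ b').take m := by
  have h2 : b.take (m - a.length) = b'.take (m - a.length) := by
    have := congrArg (List.take (m - a.length)) h
    simpa [List.take_take, Nat.min_eq_left (Nat.sub_le m a.length)] using this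
  rw [List.take_append, List.take_append, h2]

private lemma run_append {k : ℕ} {Q σ : Type*} {Γ : Fin k → Type*} (A : KPDA k Q σ Γ)
    (c : Q × (∀ i, List (Γ i))) (u w : List σ) :
    A.run c (u ++ w) = A.run (A.run c u) w := by
  induction u generalizing c with
  | nil => rfl
  | cons a u ih => simpa [KPDA.run] using ih (A.step c a)

private lemma run_fst_congr {k : ℕ} {Q σ : Type*} {Γ : Fin k → Type*} (A : KPDA k Q σ Γ) :
    ∀ (w : List σ) (n : ℕ), w.length ≤ n → ∀ (q : Q) (s t : ∀ i, List (Γ i)),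
      (∀ i, (s i).take n = (t i).take n) →
      (A.run (q, s) w).1 = (A.run (q, t) w).1 := by
  intro w
  induction w with
  | nil => intros; rfl
  | cons a w ih =>
    intro n hn q s t hst
    have hn' : w.length + 1 ≤ n := by simpa using hn
    obtain ⟨m, rfl⟩ : ∃ m, n = m + 1 := ⟨n - 1, by omega⟩
    have hh : (fun i => (s i).head?) = (fun i => (t i).head?) :=
      funext fun i => head?_eq_of_take_succ (hst i)
    show (A.run (A.step (q, s) a) w).1 = (A.run (A.step (q, t) a) w).1
    simp only [KPDA.step, hh]
    exact ih m (by simpa using hn) _ _ _ fun i =>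
      take_append_congr _ (tail_take_of_take_succ (hst i))

private noncomputable def encodeList {γ : Type*} [Nonempty γ] (n : ℕ) (l : List γ) :
    Fin (n + 1) × (Fin n → γ) :=
  (⟨min l.length n, by omega⟩, fun j => l.getD j (Classical.arbitrary γ))

private lemma encodeList_inj {γ : Type*} [Nonempty γ] {n : ℕ} {l l' : List γ}
    (hl : l.length ≤ n) (hl' : l'.length ≤ n)
    (h : encodeList n l = encodeList n l') : l = l' := by
  have h1 : l.length = l'.length := by
    have := congrArg (fun p : Fin (n + 1) × (Fin n → γ) => (p.1 : ℕ)) h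
    simpa [encodeList, Nat.min_eq_left hl, Nat.min_eq_left hl'] using this
  refine List.ext_getElem h1 fun j hj hj' => ?_
  have hjn : j < n := lt_of_lt_of_le hj hl
  have := congrArg (fun p : Fin (n + 1) × (Fin n → γ) => p.2 ⟨j, hjn⟩) h
  simp only [encodeList] at this
  rwa [List.getD_eq_getElem _ _ hj, List.getD_eq_getElem _ _ hj'] at this

private lemma indexN_le_card {k : ℕ} {Q σ : Type*} {Γ : Fin k → Type*}
    [Fintype Q] [∀ i, Fintype (Γ i)] [∀ i, Nonempty (Γ i)]
    (A : KPDA k Q σ Γ) (n : ℕ) :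
    indexN A.lang n ≤ Fintype.card Q * ∏ i, ((n + 1) * Fintype.card (Γ i) ^ n) := by
  classical
  set c0 : Q × (∀ i, List (Γ i)) := (A.q0, fun _ => []) with hc0
  let T := Q × (∀ i, Fin (n + 1) × (Fin n → Γ i))
  let Fenc : List σ → T := fun u =>
    ((A.run c0 u).1, fun i => encodeList n (((A.run c0 u).2 i).take n))
  have hFenc : ∀ u v, Fenc u = Fenc v → thetaN A.lang n u v := by
    intro u v h w hw
    have hstate : (A.run c0 u).1 = (A.run c0 v).1 := congrArg (fun p : T => p.1) h
    have htake : ∀ i, ((A.run c0 u).2 i).take n = ((A.run c0 v).2 i).take n := by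
      intro i
      refine encodeList_inj ?_ ?_ (congrFun (congrArg (fun p : T => p.2) h) i)
      · simp [List.length_take]
      · simp [List.length_take]
    have hruns : (A.run (A.run c0 u) w).1 = (A.run (A.run c0 v) w).1 := by
      have h1 := run_fst_congr A w n hw (A.run c0 u).1 ((A.run c0 u).2) ((A.run c0 v).2) htake
      calc (A.run (A.run c0 u) w).1
          = (A.run ((A.run c0 u).1, (A.run c0 v).2) w).1 := h1
        _ = (A.run (A.run c0 v) w).1 := by rw [hstate]
    show (A.run c0 (u ++ w)).1 ∈ A.F ↔ (A.run c0 (v ++ w)).1 ∈ A.F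
    rw [run_append, run_append, hruns]
  let R : List σ → List σ → Prop := fun u v => Fenc u = Fenc v
  have hinj : Function.Injective (Quot.lift Fenc (fun _ _ h => h) : Quot R → T) := by
    intro x y
    induction x using Quot.ind with | _ u =>
    induction y using Quot.ind with | _ v =>
    exact fun h => Quot.sound h
  have hfin : Finite (Quot R) := Finite.of_injective _ hinj
  have hsurj : Function.Surjective
      (Quot.map id (fun u v h => hFenc u v h) : Quot R → Quot (thetaN A.lang n)) := by
    intro x
    induction x using Quot.ind with | _ u =>
    exact ⟨Quot.mk R u, rfl⟩
  calc indexN A.lang n ≤ Nat.card (Quot R) := Nat.card_le_card_of_surjective _ hsurj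
    _ ≤ Nat.card T := Nat.card_le_card_of_injective _ hinj
    _ = Fintype.card Q * ∏ i, ((n + 1) * Fintype.card (Γ i) ^ n) := by
        simp [T, Nat.card_eq_fintype_card, Fintype.card_prod, Fintype.card_pi,
          Fintype.card_fun]

theorem entropy_kpda_le {k : ℕ} {Q σ : Type*} {Γ : Fin k → Type*}
    [Fintype Q] [Fintype σ] [∀ i, Fintype (Γ i)] [∀ i, Nonempty (Γ i)]
    (A : KPDA k Q σ Γ) :
    entropy A.lang ≤ ∑ i : Fin k, ENNReal.ofReal (Real.logb 2 (Fintype.card (Γ i))) := by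
  classical
  have hQ : Nonempty Q := ⟨A.q0⟩
  set QC : ℕ := Fintype.card Q with hQC
  have hQCpos : 0 < QC := Fintype.card_pos
  set c : Fin k → ℕ := fun i => Fintype.card (Γ i) with hc
  have hcpos : ∀ i, 0 < c i := fun i => Fintype.card_pos
  set L : ℝ := ∑ i : Fin k, Real.logb 2 (c i) with hL
  set B : ℕ → ℕ := fun n => QC * ∏ i, ((n + 1) * c i ^ n) with hB
  have hBpos : ∀ n, 0 < B n := fun n =>
    Nat.mul_pos hQCpos (Finset.prod_pos fun i _ => Nat.mul_pos (Nat.succ_pos n)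
      (Nat.pow_pos (hcpos i)))
  have hkey : ∀ n : ℕ, Real.logb 2 (B n) =
      Real.logb 2 QC + ((k : ℝ) * Real.logb 2 ((n : ℝ) + 1) + (n : ℝ) * L) := by
    intro n
    have hcast : ((B n : ℕ) : ℝ) = (QC : ℝ) * ∏ i, (((n : ℝ) + 1) * (c i : ℝ) ^ n) := by
      simp only [hB]
      push_cast
      try ring
    rw [hcast, Real.logb_mul (by positivity) (by positivity),
      Real.logb_prod _ _ (fun i _ => by positivity)]
    have hterm : ∀ i ∈ Finset.univ, Real.logb 2 (((n : ℝ) + 1) * (c i : ℝ) ^ n) =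
        Real.logb 2 ((n : ℝ) + 1) + (n : ℝ) * Real.logb 2 (c i) := by
      intro i _
      rw [Real.logb_mul (by positivity) (by positivity), Real.logb_pow]
    rw [Finset.sum_congr rfl hterm, Finset.sum_add_distrib, Finset.sum_const,
      Finset.card_univ, Fintype.card_fin, ← Finset.mul_sum, ← hL]
    push_cast
    ring
  have hmono : ∀ n : ℕ, 1 ≤ n →
      Real.logb 2 (indexN A.lang n) / n ≤ Real.logb 2 (B n) / n := by
    intro n hn
    have hnpos : (0 : ℝ) < n := by exact_mod_cast hn
    have hiB : ((indexN A.lang n : ℕ) : ℝ) ≤ ((B n : ℕ) : ℝ) := by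
      exact_mod_cast indexN_le_card A n
    have h1 : Real.logb 2 (indexN A.lang n) ≤ Real.logb 2 (B n) := by
      rcases Nat.eq_zero_or_pos (indexN A.lang n) with h0 | hpos
      · rw [h0]
        simpa using Real.logb_nonneg one_lt_two
          (by exact_mod_cast Nat.one_le_iff_ne_zero.mpr (hBpos n).ne')
      · exact Real.logb_le_logb_of_le one_lt_two (by exact_mod_cast hpos) hiB
    exact div_le_div_of_nonneg_right h1 hnpos.le
  have hlog1 : Tendsto (fun n : ℕ => Real.logb 2 QC / n) atTop (𝓝 0) :=
    tendsto_const_div_atTop_nhds_zero_nat _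
  have hlog2 : Tendsto (fun n : ℕ => Real.log ((n : ℝ) + 1) / n) atTop (𝓝 0) := by
    have h1 : Tendsto (fun n : ℕ => Real.log ((n : ℝ) + 1) / ((n : ℝ) + 1)) atTop (𝓝 0) := by
      have h0 : Tendsto (fun x : ℝ => Real.log x / x) atTop (𝓝 0) :=
        Real.isLittleO_log_id_atTop.tendsto_div_nhds_zero
      exact h0.comp (tendsto_atTop_add_const_right atTop 1 tendsto_natCast_atTop_atTop)
    have h2 : Tendsto (fun n : ℕ => ((n : ℝ) + 1) / n) atTop (𝓝 1) := by
      have h2a : Tendsto (fun n : ℕ => (1 : ℝ) + 1 / n) atTop (𝓝 (1 + 0)) :=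
        (tendsto_const_nhds : Tendsto (fun _ : ℕ => (1 : ℝ)) atTop (𝓝 1)).add
          tendsto_one_div_atTop_nhds_zero_nat
      rw [add_zero] at h2a
      refine h2a.congr' ?_
      filter_upwards [eventually_ge_atTop 1] with n hn
      have hnpos : (0 : ℝ) < n := by exact_mod_cast hn
      field_simp
    have h3 := h1.mul h2
    rw [zero_mul] at h3
    refine h3.congr' ?_
    filter_upwards [eventually_ge_atTop 1] with n hn
    have hnpos : (0 : ℝ) < n := by exact_mod_cast hn
    field_simp
  have hlogb2 : Tendsto (fun n : ℕ => (k : ℝ) * Real.logb 2 ((n : ℝ) + 1) / n)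
      atTop (𝓝 0) := by
    have h4 := hlog2.const_mul ((k : ℝ) / Real.log 2)
    rw [mul_zero] at h4
    refine h4.congr fun n => ?_
    rw [Real.logb]
    ring
  have hg : Tendsto (fun n : ℕ => Real.logb 2 (B n) / n) atTop (𝓝 L) := by
    have hsum : Tendsto (fun n : ℕ =>
        Real.logb 2 QC / n + (k : ℝ) * Real.logb 2 ((n : ℝ) + 1) / n + L)
        atTop (𝓝 (0 + 0 + L)) := (hlog1.add hlogb2).add tendsto_const_nhds
    rw [zero_add, zero_add] at hsum
    refine hsum.congr' ?_
    filter_upwards [eventually_ge_atTop 1] with n hn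
    have hnpos : (0 : ℝ) < n := by exact_mod_cast hn
    rw [hkey n]
    field_simp
    ring
  have hgE : Tendsto (fun n : ℕ => ENNReal.ofReal (Real.logb 2 (B n) / n)) atTop
      (𝓝 (ENNReal.ofReal L)) := (ENNReal.continuous_ofReal.tendsto _).comp hg
  have hlimsup : limsup (fun n : ℕ => ENNReal.ofReal (Real.logb 2 (B n) / n)) atTop
      = ENNReal.ofReal L := hgE.limsup_eq
  have hle : entropy A.lang ≤ ENNReal.ofReal L := by
    rw [entropy, ← hlimsup]
    have hev : (fun n : ℕ => ENNReal.ofReal (Real.logb 2 (indexN A.lang n) / n)) ≤ᶠ[atTop]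
        fun n : ℕ => ENNReal.ofReal (Real.logb 2 (B n) / n) := by
      filter_upwards [eventually_ge_atTop 1] with n hn
      exact ENNReal.ofReal_le_ofReal (hmono n hn)
    exact limsup_le_limsup hev
  refine hle.trans (le_of_eq ?_)
  rw [hL, ENNReal.ofReal_sum_of_nonneg]
  intro i _
  exact Real.logb_nonneg one_lt_two (by exact_mod_cast hcpos i)
end

section
/- Let p₁,…,p_k be the first k primes and let n be a multiple of p₁⋯p_k. Then the number s_n of subsets A ⊆ {0,…,n−1} such that for every prime p ≤ n the set A mod p is not all of {0,…,p−1} satisfies s_n ≤ (∏_{i≤k} p_i) · 2^{n·∏_{i≤k} (p_i−1)/p_i}. -/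
open Finset

/-- `A ⊆ {0,…,n−1}` represents a plausible sequence of primes of length `n` if for
every prime `p ≤ n` the set of residues of `A` modulo `p` is not all of `{0,…,p−1}`. -/
def PlausibleSeq (n : ℕ) (A : Finset ℕ) : Prop :=
  A ⊆ Finset.range n ∧
    ∀ p : ℕ, p.Prime → p ≤ n → A.image (· % p) ≠ Finset.range p

namespace PlausibleAux

open Classical in
/-- CRT counting: residues mod the product of the first `k` primes avoiding one
residue class for each prime. -/
lemma crt_count (k : ℕ) (L : ℕ → ℕ) (hL : ∀ i < k, L i < Nat.nth Nat.Prime i) :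
    ((Finset.range (∏ i ∈ Finset.range k, Nat.nth Nat.Prime i)).filter
      (fun r => ∀ i < k, r % Nat.nth Nat.Prime i ≠ L i)).card
      = ∏ i ∈ Finset.range k, (Nat.nth Nat.Prime i - 1) := by
  classical
  induction k with
  | zero => simp
  | succ k ih =>
    set m := ∏ i ∈ Finset.range k, Nat.nth Nat.Prime i with hm
    set q := Nat.nth Nat.Prime k with hq
    have hqprime : q.Prime := Nat.prime_nth_prime k
    have hmpos : 0 < m := Finset.prod_pos fun i _ => (Nat.prime_nth_prime i).pos
    have hqpos : 0 < q := hqprime.pos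
    have co : m.Coprime q := by
      refine Nat.Coprime.prod_left fun i hi => ?_
      refine (Nat.coprime_primes (Nat.prime_nth_prime i) hqprime).mpr (ne_of_lt ?_)
      exact (Nat.nth_lt_nth Nat.infinite_setOf_prime).mpr (Finset.mem_range.mp hi)
    have hLk : L k < q := hL k (Nat.lt_succ_self k)
    have hL' : ∀ i < k, L i < Nat.nth Nat.Prime i := fun i hi => hL i (hi.trans (Nat.lt_succ_self k))
    have hdvd : ∀ i ∈ Finset.range k, Nat.nth Nat.Prime i ∣ m :=
      fun i hi => Finset.dvd_prod_of_mem _ hi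
    rw [Finset.prod_range_succ, Finset.prod_range_succ, ← hm, ← hq, ← ih hL']
    have hcard : ((Finset.range (m * q)).filter
        (fun r => ∀ i < k + 1, r % Nat.nth Nat.Prime i ≠ L i)).card
        = (((Finset.range m).filter (fun r => ∀ i < k, r % Nat.nth Nat.Prime i ≠ L i)) ×ˢ
           ((Finset.range q).filter (fun b => b ≠ L k))).card := by
      refine Finset.card_nbij' (fun r => (r % m, r % q))
        (fun x => (Nat.chineseRemainder co x.1 x.2 : ℕ)) ?_ ?_ ?_ ?_
      · intro r hr
        rw [Finset.mem_coe, Finset.mem_filter, Finset.mem_range] at hr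
        obtain ⟨hrlt, hrc⟩ := hr
        rw [Finset.mem_coe, Finset.mem_product, Finset.mem_filter, Finset.mem_filter,
          Finset.mem_range, Finset.mem_range]
        refine ⟨⟨Nat.mod_lt _ hmpos, fun i hi => ?_⟩, Nat.mod_lt _ hqpos, ?_⟩
        · rw [Nat.mod_mod_of_dvd r (hdvd i (Finset.mem_range.mpr hi))]
          exact hrc i (hi.trans (Nat.lt_succ_self k))
        · exact hrc k (Nat.lt_succ_self k)
      · intro x hx
        rw [Finset.mem_coe, Finset.mem_product, Finset.mem_filter, Finset.mem_filter,
          Finset.mem_range, Finset.mem_range] at hx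
        obtain ⟨⟨h1, h1c⟩, h2, h2c⟩ := hx
        set c : ℕ := (Nat.chineseRemainder co x.1 x.2 : ℕ) with hc
        have hcm : c % m = x.1 := by
          have := (Nat.chineseRemainder co x.1 x.2).2.1
          rwa [Nat.ModEq, Nat.mod_eq_of_lt h1] at this
        have hcq : c % q = x.2 := by
          have := (Nat.chineseRemainder co x.1 x.2).2.2
          rwa [Nat.ModEq, Nat.mod_eq_of_lt h2] at this
        rw [Finset.mem_coe, Finset.mem_filter, Finset.mem_range]
        refine ⟨Nat.chineseRemainder_lt_mul co x.1 x.2 hmpos.ne' hqpos.ne', fun i hi => ?_⟩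
        rcases Nat.lt_succ_iff_lt_or_eq.mp hi with hik | rfl
        · rw [← Nat.mod_mod_of_dvd c (hdvd i (Finset.mem_range.mpr hik)), hcm]
          exact h1c i hik
        · rw [← hq, hcq]; exact h2c
      · intro r hr
        rw [Finset.mem_coe, Finset.mem_filter, Finset.mem_range] at hr
        set c : ℕ := (Nat.chineseRemainder co (r % m) (r % q) : ℕ) with hc
        have h1 : c ≡ r [MOD m] := (Nat.chineseRemainder co (r % m) (r % q)).2.1.trans
          (Nat.mod_mod_of_dvd r dvd_rfl ▸ (Nat.mod_modEq r m))
        have h2 : c ≡ r [MOD q] := (Nat.chineseRemainder co (r % m) (r % q)).2.2.trans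
          (Nat.mod_modEq r q)
        have h3 : c ≡ r [MOD m * q] := (Nat.modEq_and_modEq_iff_modEq_mul co).mp ⟨h1, h2⟩
        have hclt : c < m * q := Nat.chineseRemainder_lt_mul co _ _ hmpos.ne' hqpos.ne'
        have := h3
        rwa [Nat.ModEq, Nat.mod_eq_of_lt hclt, Nat.mod_eq_of_lt hr.1] at this
      · intro x hx
        rw [Finset.mem_coe, Finset.mem_product, Finset.mem_filter, Finset.mem_filter,
          Finset.mem_range, Finset.mem_range] at hx
        obtain ⟨⟨h1, _⟩, h2, _⟩ := hx
        have hcm := (Nat.chineseRemainder co x.1 x.2).2.1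
        have hcq := (Nat.chineseRemainder co x.1 x.2).2.2
        rw [Nat.ModEq, Nat.mod_eq_of_lt h1] at hcm
        rw [Nat.ModEq, Nat.mod_eq_of_lt h2] at hcq
        exact Prod.ext hcm hcq
    rw [hcard, Finset.card_product]
    congr 1
    have : (Finset.range q).filter (fun b => b ≠ L k) = (Finset.range q).erase (L k) :=
      Finset.filter_ne' _ _
    rw [this, Finset.card_erase_of_mem (Finset.mem_range.mpr hLk), Finset.card_range]

open Classical in
lemma block_count (k n : ℕ)
    (hdvd : (∏ i ∈ Finset.range k, Nat.nth Nat.Prime i) ∣ n)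
    (L : ℕ → ℕ) (hL : ∀ i < k, L i < Nat.nth Nat.Prime i) :
    ((Finset.range n).filter (fun x => ∀ i < k, x % Nat.nth Nat.Prime i ≠ L i)).card
      = (n / ∏ i ∈ Finset.range k, Nat.nth Nat.Prime i) *
          ∏ i ∈ Finset.range k, (Nat.nth Nat.Prime i - 1) := by
  classical
  set P := ∏ i ∈ Finset.range k, Nat.nth Nat.Prime i with hP
  have hPpos : 0 < P := Finset.prod_pos fun i _ => (Nat.prime_nth_prime i).pos
  have hpdvd : ∀ i < k, Nat.nth Nat.Prime i ∣ P :=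
    fun i hi => Finset.dvd_prod_of_mem _ (Finset.mem_range.mpr hi)
  have hcard : ((Finset.range n).filter (fun x => ∀ i < k, x % Nat.nth Nat.Prime i ≠ L i)).card
      = ((Finset.range (n / P)) ×ˢ
         ((Finset.range P).filter (fun r => ∀ i < k, r % Nat.nth Nat.Prime i ≠ L i))).card := by
    refine Finset.card_nbij' (fun x => (x / P, x % P)) (fun y => y.1 * P + y.2) ?_ ?_ ?_ ?_
    · intro x hx
      rw [Finset.mem_coe, Finset.mem_filter, Finset.mem_range] at hx
      obtain ⟨hxlt, hxc⟩ := hx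
      rw [Finset.mem_coe, Finset.mem_product, Finset.mem_filter, Finset.mem_range, Finset.mem_range]
      refine ⟨Nat.div_lt_div_of_lt_of_dvd hdvd hxlt, Nat.mod_lt _ hPpos, fun i hi => ?_⟩
      rw [Nat.mod_mod_of_dvd x (hpdvd i hi)]
      exact hxc i hi
    · intro y hy
      rw [Finset.mem_coe, Finset.mem_product, Finset.mem_filter, Finset.mem_range, Finset.mem_range] at hy
      obtain ⟨h1, h2, h2c⟩ := hy
      rw [Finset.mem_coe, Finset.mem_filter, Finset.mem_range]
      constructor
      · calc y.1 * P + y.2 < (y.1 + 1) * P := by nlinarith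
          _ ≤ (n / P) * P := Nat.mul_le_mul_right _ h1
          _ = n := Nat.div_mul_cancel hdvd
      · intro i hi
        obtain ⟨c, hc⟩ := hpdvd i hi
        have heq : y.1 * P + y.2 = y.2 + (y.1 * c) * Nat.nth Nat.Prime i := by
          rw [hc]; ring
        show (y.1 * P + y.2) % Nat.nth Nat.Prime i ≠ L i
        rw [heq, Nat.add_mul_mod_self_right]
        exact h2c i hi
    · intro x _
      exact Nat.div_add_mod' x P
    · intro y hy
      rw [Finset.mem_coe, Finset.mem_product, Finset.mem_filter, Finset.mem_range, Finset.mem_range] at hy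
      obtain ⟨h1, h2, _⟩ := hy
      have hdiv : (y.1 * P + y.2) / P = y.1 := by
        rw [Nat.add_comm, Nat.add_mul_div_right _ _ hPpos, Nat.div_eq_of_lt h2, Nat.zero_add]
      have hmod : (y.1 * P + y.2) % P = y.2 := by
        rw [Nat.add_comm, Nat.add_mul_mod_self_right, Nat.mod_eq_of_lt h2]
      exact Prod.ext hdiv hmod
  rw [hcard, Finset.card_product, Finset.card_range, crt_count k L hL]

end PlausibleAux

theorem plausible_seq_count_bound (k n : ℕ)
    (hdvd : (∏ i ∈ Finset.range k, Nat.nth Nat.Prime i) ∣ n) :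
    Nat.card {A : Finset ℕ // PlausibleSeq n A} ≤
      (∏ i ∈ Finset.range k, Nat.nth Nat.Prime i) *
        2 ^ ((n / ∏ i ∈ Finset.range k, Nat.nth Nat.Prime i) *
          ∏ i ∈ Finset.range k, (Nat.nth Nat.Prime i - 1)) := by
  classical
  set P := ∏ i ∈ Finset.range k, Nat.nth Nat.Prime i with hP
  have hPpos : 0 < P := Finset.prod_pos fun i _ => (Nat.prime_nth_prime i).pos
  rcases Nat.eq_zero_or_pos n with rfl | hn
  · -- n = 0 : at most one plausible set (the empty set)
    have hsub : ∀ a : {A : Finset ℕ // PlausibleSeq 0 A}, a.1 = ∅ := by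
      rintro ⟨A, hA, -⟩
      simpa [Finset.subset_empty] using hA
    have hinj : Function.Injective (fun _ : {A : Finset ℕ // PlausibleSeq 0 A} => (() : Unit)) :=
      fun a b _ => Subtype.ext ((hsub a).trans (hsub b).symm)
    calc Nat.card {A : Finset ℕ // PlausibleSeq 0 A} ≤ Nat.card Unit :=
          Nat.card_le_card_of_injective _ hinj
      _ = 1 := by simp
      _ ≤ P * 2 ^ (0 / P * ∏ i ∈ Finset.range k, (Nat.nth Nat.Prime i - 1)) :=
          Nat.one_le_iff_ne_zero.mpr (by positivity)
  · have hPn : P ≤ n := Nat.le_of_dvd hn hdvd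
    have hpP : ∀ i < k, Nat.nth Nat.Prime i ≤ n := fun i hi =>
      le_trans (Nat.le_of_dvd hPpos (Finset.dvd_prod_of_mem _ (Finset.mem_range.mpr hi))) hPn
    -- every plausible set misses a residue class mod each of the first k primes
    have key : ∀ A : Finset ℕ, PlausibleSeq n A → ∀ i, i < k →
        ∃ ℓ, ℓ < Nat.nth Nat.Prime i ∧ ∀ a ∈ A, a % Nat.nth Nat.Prime i ≠ ℓ := by
      intro A hA i hik
      have hp := Nat.prime_nth_prime i
      have himg := hA.2 _ hp (hpP i hik)
      have hsub : A.image (· % Nat.nth Nat.Prime i) ⊆ Finset.range (Nat.nth Nat.Prime i) := by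
        intro x hx
        obtain ⟨a, _, rfl⟩ := Finset.mem_image.mp hx
        exact Finset.mem_range.mpr (Nat.mod_lt _ hp.pos)
      obtain ⟨ℓ, hℓmem, hℓnot⟩ := Finset.exists_of_ssubset (hsub.ssubset_of_ne himg)
      exact ⟨ℓ, Finset.mem_range.mp hℓmem, fun a ha h => hℓnot (Finset.mem_image.mpr ⟨a, ha, h⟩)⟩
    set S : (Fin k → ℕ) → Finset ℕ := fun ℓ =>
      (Finset.range n).filter
        (fun x => ∀ i < k, ∀ h : i < k, x % Nat.nth Nat.Prime i ≠ ℓ ⟨i, h⟩) with hS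
    set E := (n / P) * ∏ i ∈ Finset.range k, (Nat.nth Nat.Prime i - 1) with hE
    have hScard : ∀ ℓ : Fin k → ℕ, (∀ i : Fin k, ℓ i < Nat.nth Nat.Prime i) →
        (S ℓ).card = E := by
      intro ℓ hℓ
      have := PlausibleAux.block_count k n hdvd
        (fun i => if h : i < k then ℓ ⟨i, h⟩ else 0)
        (fun i hi => by simp only [dif_pos hi]; exact hℓ ⟨i, hi⟩)
      rw [hE, ← this, hS]
      congr 1
      apply Finset.filter_congr
      intro x _
      constructor
      · intro h i hi; simp only [dif_pos hi]; exact h i hi hi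
      · intro h i hi hi'; have := h i hi; simp only [dif_pos hi] at this; exact this
    set T : Finset ((Σ _ : Fin k → ℕ, Finset ℕ)) :=
      (Fintype.piFinset fun i : Fin k => Finset.range (Nat.nth Nat.Prime i)).sigma
        (fun ℓ => (S ℓ).powerset) with hT
    have hTcard : T.card = P * 2 ^ E := by
      rw [hT, Finset.card_sigma]
      have : ∀ ℓ ∈ Fintype.piFinset fun i : Fin k => Finset.range (Nat.nth Nat.Prime i),
          ((S ℓ).powerset).card = 2 ^ E := by
        intro ℓ hℓ
        rw [Finset.card_powerset, hScard ℓ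
          (fun i => Finset.mem_range.mp (Fintype.mem_piFinset.mp hℓ i))]
      rw [Finset.sum_congr rfl this, Finset.sum_const, Fintype.card_piFinset]
      simp only [Finset.card_range, smul_eq_mul]
      rw [Fin.prod_univ_eq_prod_range (fun i => Nat.nth Nat.Prime i) k, ← hP]
    -- injection into T
    have hmap : ∀ a : {A : Finset ℕ // PlausibleSeq n A},
        (⟨fun i : Fin k => (key a.1 a.2 i i.isLt).choose, a.1⟩ : Σ _ : Fin k → ℕ, Finset ℕ) ∈ T := by
      rintro ⟨A, hA⟩
      rw [hT, Finset.mem_sigma]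
      constructor
      · rw [Fintype.mem_piFinset]
        intro i
        exact Finset.mem_range.mpr (key A hA i i.isLt).choose_spec.1
      · rw [Finset.mem_powerset, hS]
        intro a ha
        rw [Finset.mem_filter, Finset.mem_range]
        exact ⟨Finset.mem_range.mp (hA.1 ha), fun i hi h =>
          (key A hA i h).choose_spec.2 a ha⟩
    let f : {A : Finset ℕ // PlausibleSeq n A} → {x // x ∈ T} :=
      fun a => ⟨⟨fun i : Fin k => (key a.1 a.2 i i.isLt).choose, a.1⟩, hmap a⟩
    have hinj : Function.Injective f := by
      intro a b hab
      apply Subtype.ext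
      have := congrArg (fun x => x.1.2) hab
      exact this
    calc Nat.card {A : Finset ℕ // PlausibleSeq n A} ≤ Nat.card {x // x ∈ T} :=
          Nat.card_le_card_of_injective f hinj
      _ = T.card := Nat.card_eq_finsetCard T
      _ = P * 2 ^ E := hTcard
end

section
/- The unary language Prime = {n ∈ ℕ | n prime} has topological entropy zero: η(Prime) = 0. -/
open Filter

/-- Myhill–Nerode approximation for unary languages (as subsets of `ℕ`). -/
def thetaNatN (L : Set ℕ) (n : ℕ) (a b : ℕ) : Prop :=
  ∀ k ≤ n, ((a + k) ∈ L ↔ (b + k) ∈ L)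

noncomputable def indexNatN (L : Set ℕ) (n : ℕ) : ℕ :=
  Nat.card (Quot (thetaNatN L n))

noncomputable def entropyNat (L : Set ℕ) : ENNReal :=
  Filter.limsup (fun n : ℕ => ENNReal.ofReal (Real.logb 2 (indexNatN L n) / n)) Filter.atTop

namespace PE
open Finset

/-- shifted coprimality mod -/
lemma cop_mod (x m : ℕ) : Nat.Coprime (x % m) m ↔ Nat.Coprime x m := by
  unfold Nat.Coprime
  rw [← Nat.gcd_rec, Nat.gcd_comm]

def P (z : ℕ) : Finset ℕ := {p ∈ range z | p.Prime}

def M (z : ℕ) : ℕ := ∏ p ∈ P z, p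

lemma M_pos (z : ℕ) : 0 < M z :=
  Finset.prod_pos fun p hp => (Finset.mem_filter.1 hp).2.pos

lemma cop_iff (z x : ℕ) : Nat.Coprime x (M z) ↔ ∀ p ∈ P z, ¬ p ∣ x := by
  rw [M, Nat.coprime_prod_right_iff]
  refine forall₂_congr fun p hp => ?_
  rw [Nat.coprime_comm]
  exact (Finset.mem_filter.1 hp).2.coprime_iff_not_dvd

lemma tot_prod (s : Finset ℕ) (hs : ∀ p ∈ s, p.Prime) :
    Nat.totient (∏ p ∈ s, p) = ∏ p ∈ s, (p - 1) := by
  induction s using Finset.induction with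
  | empty => simp
  | @insert a s hns ih =>
    rw [Finset.prod_insert hns, Finset.prod_insert hns,
      Nat.totient_mul, Nat.totient_prime (hs a (Finset.mem_insert_self a s)),
      ih fun p hp => hs p (Finset.mem_insert_of_mem hp)]
    exact Nat.Coprime.prod_right fun p hp =>
      (Nat.coprime_primes (hs a (Finset.mem_insert_self a s))
        (hs p (Finset.mem_insert_of_mem hp))).2 (by rintro rfl; exact hns hp)

lemma block (m s : ℕ) (hm : 0 < m) :
    #{k ∈ range m | Nat.Coprime (s + k) m} ≤ m.totient := by
  rw [Nat.totient]
  apply Finset.card_le_card_of_injOn (fun k => (s + k) % m)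
  · intro k hk
    simp only [Finset.coe_filter, Set.mem_setOf_eq, Finset.mem_filter, Finset.mem_range] at hk ⊢
    refine ⟨Nat.mod_lt _ hm, ?_⟩
    rw [Nat.coprime_comm]
    exact (cop_mod _ _).2 hk.2
  · intro k₁ h₁ k₂ h₂ h
    simp only [Finset.coe_filter, Set.mem_setOf_eq, Finset.mem_range] at h₁ h₂
    have h' : k₁ ≡ k₂ [MOD m] := Nat.ModEq.add_left_cancel' s h
    rwa [Nat.ModEq, Nat.mod_eq_of_lt h₁.1, Nat.mod_eq_of_lt h₂.1] at h'

lemma count_blocks (m : ℕ) (hm : 0 < m) (q : ℕ) : ∀ t : ℕ,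
    #{k ∈ range (q * m) | Nat.Coprime (t + k) m} ≤ q * m.totient := by
  induction q with
  | zero => simp
  | succ q ih =>
    intro t
    rw [add_mul, one_mul, Finset.range_add, Finset.filter_union]
    refine (Finset.card_union_le _ _).trans ?_
    rw [add_mul, one_mul]
    refine Nat.add_le_add (ih t) ?_
    rw [Finset.filter_map, Finset.card_map]
    refine le_trans (le_of_eq ?_) (block m (t + q * m) hm)
    congr 1
    apply Finset.filter_congr
    intro k _
    simp only [Function.comp_apply, addLeftEmbedding_apply, eq_iff_iff]
    rw [add_assoc]

lemma count_range (m : ℕ) (hm : 0 < m) (N t : ℕ) :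
    #{k ∈ range N | Nat.Coprime (t + k) m} ≤ (N / m + 1) * m.totient := by
  refine le_trans (Finset.card_le_card ?_) (count_blocks m hm (N / m + 1) t)
  apply Finset.filter_subset_filter
  apply Finset.range_subset_range.2
  have h1 := Nat.div_add_mod N m
  have h2 := Nat.mod_lt N hm
  nlinarith [Nat.div_add_mod N m]

def pat (n a : ℕ) : Finset ℕ := {k ∈ range (n + 1) | Nat.Prime (a + k)}

lemma theta_iff_pat (n a b : ℕ) :
    thetaNatN {m : ℕ | m.Prime} n a b ↔ pat n a = pat n b := by
  unfold thetaNatN pat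
  simp only [Set.mem_setOf_eq, Finset.ext_iff, Finset.mem_filter, Finset.mem_range,
    Nat.lt_succ_iff]
  constructor
  · intro h k
    constructor
    · rintro ⟨hk, hp⟩; exact ⟨hk, (h k hk).1 hp⟩
    · rintro ⟨hk, hp⟩; exact ⟨hk, (h k hk).2 hp⟩
  · intro h k hk
    constructor
    · intro hp; exact ((h k).1 ⟨hk, hp⟩).2
    · intro hp; exact ((h k).2 ⟨hk, hp⟩).2

lemma index_le_card (L : Set ℕ) (n : ℕ) (f : ℕ → Finset ℕ)
    (hf : ∀ a b, f a = f b → thetaNatN L n a b)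
    (hfr : ∀ a b, thetaNatN L n a b → f a = f b)
    (T : Finset (Finset ℕ)) (hT : ∀ a, f a ∈ T) :
    indexNatN L n ≤ T.card := by
  let F : Quot (thetaNatN L n) → {x // x ∈ T} :=
    Quot.lift (fun a => (⟨f a, hT a⟩ : {x // x ∈ T}))
      (fun a b h => by simp only [Subtype.mk.injEq]; exact hfr a b h)
  have hinj : Function.Injective F := by
    intro q₁ q₂
    induction q₁ using Quot.ind with | _ a =>
    induction q₂ using Quot.ind with | _ b =>
    intro h
    exact Quot.sound (hf a b (by simpa [F] using congrArg Subtype.val h))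
  calc indexNatN L n = Nat.card (Quot (thetaNatN L n)) := rfl
    _ ≤ Nat.card {x // x ∈ T} := Nat.card_le_card_of_injective F hinj
    _ = T.card := by rw [Nat.card_eq_fintype_card, Fintype.card_coe]

def S (n z r : ℕ) : Finset ℕ := {k ∈ range (n + 1) | Nat.Coprime (r + k) (M z)}

def T (n z : ℕ) : Finset (Finset ℕ) :=
  (range (n + 2)).image (pat n) ∪ (range (M z)).biUnion (fun r => (S n z r).powerset)

lemma pat_mem_T (n z a : ℕ) (hz : z ≤ n + 2) : pat n a ∈ T n z := by
  by_cases ha : a < n + 2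
  · exact Finset.mem_union_left _ (Finset.mem_image.2 ⟨a, Finset.mem_range.2 ha, rfl⟩)
  · push_neg at ha
    refine Finset.mem_union_right _ (Finset.mem_biUnion.2
      ⟨a % M z, Finset.mem_range.2 (Nat.mod_lt _ (M_pos z)), Finset.mem_powerset.2 ?_⟩)
    intro k hk
    rw [pat, Finset.mem_filter] at hk
    obtain ⟨hk1, hk2⟩ := hk
    rw [S, Finset.mem_filter]
    refine ⟨hk1, ?_⟩
    have hcop : Nat.Coprime (a + k) (M z) := by
      rw [cop_iff]
      intro p hp hdvd
      have hpp : p.Prime := (Finset.mem_filter.1 hp).2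
      have hpz : p < z := Finset.mem_range.1 (Finset.mem_filter.1 hp).1
      have : p = a + k := (Nat.prime_dvd_prime_iff_eq hpp hk2).1 hdvd
      omega
    rw [← cop_mod]
    have : (a % M z + k) % M z = (a + k) % M z := by
      conv_lhs => rw [Nat.add_mod, Nat.mod_mod_of_dvd a dvd_rfl, ← Nat.add_mod]
    rw [this, cop_mod]
    exact hcop

lemma S_card (n z r : ℕ) : (S n z r).card ≤ ((n + 1) / M z + 1) * (M z).totient :=
  count_range (M z) (M_pos z) (n + 1) r

lemma T_card (n z : ℕ) :
    (T n z).card ≤ (n + 2) + M z * 2 ^ (((n + 1) / M z + 1) * (M z).totient) := by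
  refine (Finset.card_union_le _ _).trans (Nat.add_le_add ?_ ?_)
  · exact (Finset.card_image_le).trans (by simp)
  · refine (Finset.card_biUnion_le).trans ?_
    have h1 : ∀ r ∈ range (M z), ((S n z r).powerset).card ≤
        2 ^ (((n + 1) / M z + 1) * (M z).totient) := by
      intro r _
      rw [Finset.card_powerset]
      exact Nat.pow_le_pow_right (by norm_num) (S_card n z r)
    refine (Finset.sum_le_sum h1).trans ?_
    rw [Finset.sum_const, Finset.card_range, smul_eq_mul]

lemma index_bound (n z : ℕ) (hz : z ≤ n + 2) :
    indexNatN {m : ℕ | m.Prime} n ≤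
      (n + 2) + M z * 2 ^ (((n + 1) / M z + 1) * (M z).totient) := by
  refine le_trans (index_le_card _ n (pat n) ?_ ?_ (T n z) (fun a => pat_mem_T n z a hz))
    (T_card n z)
  · exact fun a b h => (theta_iff_pat n a b).2 h
  · exact fun a b h => (theta_iff_pat n a b).1 h

noncomputable def t (z : ℕ) : ℝ := ((M z).totient : ℝ) / (M z)

lemma t_eq (z : ℕ) : t z = ∏ p ∈ P z, (1 - 1 / (p : ℝ)) := by
  rw [t, M, tot_prod (P z) (fun p hp => (Finset.mem_filter.1 hp).2)]
  push_cast
  rw [← Finset.prod_div_distrib]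
  refine Finset.prod_congr rfl fun p hp => ?_
  have hp2 : (2 : ℕ) ≤ p := (Finset.mem_filter.1 hp).2.two_le
  have hp0 : (p : ℝ) ≠ 0 := by positivity
  rw [Nat.cast_sub (by omega), Nat.cast_one]
  field_simp

lemma t_nonneg (z : ℕ) : 0 ≤ t z := by
  rw [t]; positivity

lemma t_le_exp (z : ℕ) : t z ≤ Real.exp (-∑ p ∈ P z, 1 / (p : ℝ)) := by
  rw [t_eq, ← Finset.sum_neg_distrib, Real.exp_sum]
  refine Finset.prod_le_prod (fun p hp => ?_) (fun p hp => ?_)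
  · have hp2 : (2 : ℕ) ≤ p := (Finset.mem_filter.1 hp).2.two_le
    have : 1 / (p : ℝ) ≤ 1 := by
      rw [div_le_one (by positivity)]
      exact_mod_cast by omega
    linarith
  · have := Real.add_one_le_exp (-(1 / (p : ℝ)))
    linarith

lemma sum_tendsto : Tendsto (fun z => ∑ p ∈ P z, 1 / (p : ℝ)) atTop atTop := by
  have hnn : ∀ n : ℕ, 0 ≤ Set.indicator {p | Nat.Prime p} (fun n : ℕ => (1 : ℝ) / n) n :=
    fun n => Set.indicator_nonneg (fun p _ => by positivity) n
  have h := (not_summable_iff_tendsto_nat_atTop_of_nonneg hnn).1 not_summable_one_div_on_primes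
  convert h using 2 with z
  rw [P, Finset.sum_filter]
  refine Finset.sum_congr rfl fun i _ => ?_
  by_cases hi : i.Prime <;> simp [Set.indicator_apply, hi]

lemma t_tendsto : Tendsto t atTop (nhds 0) := by
  refine squeeze_zero t_nonneg t_le_exp ?_
  exact Real.tendsto_exp_atBot.comp (Filter.tendsto_neg_atBot_iff.2 sum_tendsto)

lemma log_div_tendsto (D : ℝ) :
    Tendsto (fun n : ℕ => (Real.logb 2 ((n : ℝ) + 2) + D) / n) atTop (nhds 0) := by
  have h1 : Tendsto (fun x : ℝ => Real.log x / x) atTop (nhds 0) :=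
    Real.isLittleO_log_id_atTop.tendsto_div_nhds_zero
  have h2 : Tendsto (fun n : ℕ => ((n : ℝ) + 2)) atTop atTop :=
    tendsto_natCast_atTop_atTop.atTop_add tendsto_const_nhds
  have h3 : Tendsto (fun n : ℕ => Real.log ((n : ℝ) + 2) / ((n : ℝ) + 2)) atTop (nhds 0) :=
    h1.comp h2
  have h4 : Tendsto (fun n : ℕ => ((n : ℝ) + 2) / n) atTop (nhds 1) := by
    have : (fun n : ℕ => ((n : ℝ) + 2) / n) =ᶠ[atTop] fun n : ℕ => 1 + 2 / n := by
      filter_upwards [eventually_gt_atTop 0] with n hn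
      have : (n : ℝ) ≠ 0 := by positivity
      field_simp
    rw [tendsto_congr' this]
    have := (tendsto_const_div_atTop_nhds_zero_nat (2 : ℝ)).const_add 1
    simpa using this
  have h5 : Tendsto (fun n : ℕ => Real.log ((n : ℝ) + 2) / n) atTop (nhds 0) := by
    have heq : ∀ n : ℕ, Real.log ((n : ℝ) + 2) / n =
        (Real.log ((n : ℝ) + 2) / ((n : ℝ) + 2)) * (((n : ℝ) + 2) / n) := by
      intro n
      have hne : (n : ℝ) + 2 ≠ 0 := by positivity
      rw [div_mul_div_comm, mul_comm ((n:ℝ)+2) ((n:ℝ))]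
      rw [mul_div_mul_right _ _ hne]
    simp_rw [heq]
    simpa using h3.mul h4
  have h6 : Tendsto (fun n : ℕ => D / (n : ℝ)) atTop (nhds 0) :=
    tendsto_const_div_atTop_nhds_zero_nat D
  have h7 : Tendsto (fun n : ℕ => Real.log ((n : ℝ) + 2) / n / Real.log 2 + D / n)
      atTop (nhds 0) := by
    have := (h5.div_const (Real.log 2)).add h6
    simpa using this
  refine h7.congr fun n => ?_
  rw [Real.logb, add_div, div_div]
  ring

lemma nat_div_tendsto (c : ℝ) :
    Tendsto (fun n : ℕ => ((n : ℝ) + c) / n) atTop (nhds 1) := by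
  have heq : (fun n : ℕ => ((n : ℝ) + c) / n) =ᶠ[atTop] fun n : ℕ => 1 + c / n := by
    filter_upwards [eventually_gt_atTop 0] with n hn
    have : (n : ℝ) ≠ 0 := by positivity
    field_simp
  rw [tendsto_congr' heq]
  simpa using (tendsto_const_div_atTop_nhds_zero_nat c).const_add 1

lemma main_tendsto :
    Tendsto (fun n : ℕ => Real.logb 2 (indexNatN {m : ℕ | m.Prime} n) / n) atTop (nhds 0) := by
  rw [Metric.tendsto_atTop]
  intro ε hε
  obtain ⟨z, hzt⟩ : ∃ z, t z < ε / 2 :=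
    ((tendsto_order.1 t_tendsto).2 (ε / 2) (by positivity)).exists
  set D : ℝ := Real.logb 2 (2 * M z) + M z with hD
  have hD0 : 0 ≤ D := by
    have h1 : (1 : ℝ) ≤ 2 * M z := by
      have := M_pos z
      have : (1 : ℝ) ≤ (M z : ℝ) := by exact_mod_cast this
      linarith
    have := Real.logb_nonneg (b := 2) (by norm_num) h1
    have hM0 : (0 : ℝ) ≤ M z := by positivity
    rw [hD]; linarith
  set h : ℕ → ℝ := fun n => (Real.logb 2 ((n : ℝ) + 2) + D) / n + t z * (((n : ℝ) + 1) / n)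
    with hh
  have hht : Tendsto h atTop (nhds (0 + t z * 1)) :=
    (log_div_tendsto D).add (tendsto_const_nhds.mul (nat_div_tendsto 1))
  rw [zero_add, mul_one] at hht
  have hev : ∀ᶠ n : ℕ in atTop, h n < ε :=
    (tendsto_order.1 hht).2 ε (by linarith)
  have hev2 : ∀ᶠ n : ℕ in atTop, z ≤ n + 2 ∧ 1 ≤ n := by
    filter_upwards [eventually_ge_atTop z, eventually_ge_atTop 1] with n h1 h2
    exact ⟨by omega, h2⟩
  obtain ⟨N, hN⟩ := (hev.and hev2).exists_forall_of_atTop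
  refine ⟨N, fun n hn => ?_⟩
  obtain ⟨hhn, hzn, h1n⟩ := hN n hn
  set g : ℝ := Real.logb 2 (indexNatN {m : ℕ | m.Prime} n) / n with hg
  have hn0 : (0 : ℝ) < n := by exact_mod_cast h1n
  have hg0 : 0 ≤ g := by
    rcases Nat.eq_zero_or_pos (indexNatN {m : ℕ | m.Prime} n) with h0 | h0
    · rw [hg, h0]; simp
    · have : (1 : ℝ) ≤ (indexNatN {m : ℕ | m.Prime} n : ℝ) := by exact_mod_cast h0
      have := Real.logb_nonneg (b := 2) (by norm_num) this
      positivity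
  have hgh : g ≤ h n := by
    rcases Nat.eq_zero_or_pos (indexNatN {m : ℕ | m.Prime} n) with h0 | h0
    · rw [hg, h0]
      simp only [Nat.cast_zero, Real.logb_zero, zero_div]
      have ht0 := t_nonneg z
      have hl : 0 ≤ Real.logb 2 ((n : ℝ) + 2) :=
        Real.logb_nonneg (by norm_num) (by push_cast; linarith)
      rw [hh]
      have : 0 ≤ (((n : ℝ) + 1) / n) := by positivity
      have : 0 ≤ t z * (((n : ℝ) + 1) / n) := by positivity
      have : 0 ≤ (Real.logb 2 ((n : ℝ) + 2) + D) / n := by positivity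
      linarith
    · -- main case
      set B : ℕ := ((n + 1) / M z + 1) * (M z).totient with hB
      have hb1 : indexNatN {m : ℕ | m.Prime} n ≤ (n + 2) * ((2 * M z) * 2 ^ B) := by
        refine (index_bound n z hzn).trans ?_
        have hMB : 0 < M z * 2 ^ B := Nat.mul_pos (M_pos z) (pow_pos (by norm_num) B)
        nlinarith [M_pos z, Nat.one_le_two_pow (n := B)]
      have hcast : (indexNatN {m : ℕ | m.Prime} n : ℝ) ≤
          ((n : ℝ) + 2) * ((2 * M z) * 2 ^ B) := by
        have := hb1
        exact_mod_cast this
      have hMz0 : (0 : ℝ) < M z := by exact_mod_cast M_pos z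
      have hstep : Real.logb 2 (indexNatN {m : ℕ | m.Prime} n) ≤
          Real.logb 2 ((n : ℝ) + 2) + Real.logb 2 (2 * M z) + B := by
        have hpos : (0 : ℝ) < indexNatN {m : ℕ | m.Prime} n := by exact_mod_cast h0
        have := Real.logb_le_logb_of_le (b := 2) (by norm_num) hpos hcast
        refine this.trans (le_of_eq ?_)
        rw [Real.logb_mul (by positivity) (by positivity),
            Real.logb_mul (by positivity) (by positivity),
            Real.logb_pow, Real.logb_self_eq_one (by norm_num)]
        ring
      have hBle : (B : ℝ) ≤ ((n : ℝ) + 1) * t z + M z := by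
        have h1 : ((((n + 1) / M z : ℕ)) : ℝ) ≤ ((n : ℝ) + 1) / M z := by
          have := Nat.cast_div_le (α := ℝ) (m := n + 1) (n := M z)
          push_cast at this ⊢
          exact this
        have h2 : ((M z).totient : ℝ) ≤ M z := by exact_mod_cast Nat.totient_le (M z)
        have h3 : (0 : ℝ) ≤ ((M z).totient : ℝ) := by positivity
        have : (B : ℝ) = (((n + 1) / M z : ℕ) + 1 : ℝ) * ((M z).totient : ℝ) := by
          rw [hB]; push_cast; ring
        rw [this]
        have ht : t z = ((M z).totient : ℝ) / M z := rfl
        have key : (((n + 1) / M z : ℕ) + 1 : ℝ) * ((M z).totient : ℝ) ≤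
            (((n : ℝ) + 1) / M z + 1) * ((M z).totient : ℝ) := by nlinarith
        refine key.trans ?_
        rw [ht]
        have : (((n : ℝ) + 1) / M z + 1) * ((M z).totient : ℝ) =
            ((n : ℝ) + 1) * (((M z).totient : ℝ) / M z) + ((M z).totient : ℝ) := by
          field_simp
        rw [this]
        linarith
      rw [hg, hh]
      have hmain : Real.logb 2 (indexNatN {m : ℕ | m.Prime} n) ≤
          (Real.logb 2 ((n : ℝ) + 2) + D) + t z * ((n : ℝ) + 1) := by
        rw [hD]; linarith
      calc Real.logb 2 (indexNatN {m : ℕ | m.Prime} n) / n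
          ≤ ((Real.logb 2 ((n : ℝ) + 2) + D) + t z * ((n : ℝ) + 1)) / n := by
            gcongr
        _ = (Real.logb 2 ((n : ℝ) + 2) + D) / n + t z * (((n : ℝ) + 1) / n) := by
            field_simp
  rw [Real.dist_eq, sub_zero, abs_of_nonneg hg0]
  exact lt_of_le_of_lt hgh hhn

end PE

theorem entropy_primes_zero : entropyNat {n : ℕ | n.Prime} = 0 := by
  have h2 : Tendsto (fun n : ℕ =>
      ENNReal.ofReal (Real.logb 2 (indexNatN {m : ℕ | m.Prime} n) / n)) atTop (nhds 0) := by
    have := (ENNReal.continuous_ofReal.tendsto 0).comp PE.main_tendsto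
    simpa [Function.comp_def] using this
  exact h2.limsup_eq
end
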